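/- For all natural numbers a, b, d, n, p, q with d > 0, μ_{a,b,d,n}(p·d^n + q) = μ_{a,b,d,n}(q), where μ_{a,b,d,n}(q) is the number of indices 0 ≤ i < n such that f_{a,b,d}^i(q) is not divisible by d. -/

import Mathlib

/-- `f a b d m = m / d` if `d ∣ m`, else `a * m + b`. -/
def fabd (a b d : ℕ) : ℕ → ℕ := fun m => if d ∣ m then m / d else a * m + b

/-- `μ a b d n q` counts indices `i < n` with `d ∤ f^[i] q`. -/
def muabd (a b d n q : ℕ) : ℕ :=
  ((Finset.range n).filter (fun i => ¬ d ∣ (fabd a b d)^[i] q)).card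

lemma fabd_key (a b d n p q : ℕ) (hd : 2 ≤ d) :
    ∀ i ≤ n, ∃ c, (fabd a b d)^[i] (p * d ^ n + q) = c * d ^ (n - i) + (fabd a b d)^[i] q := by
  intro i
  induction i with
  | zero => intro _; exact ⟨p, by simp⟩
  | succ i ih =>
    intro hin
    obtain ⟨c, hc⟩ := ih (Nat.le_of_succ_le hin)
    have hni : n - i = (n - (i + 1)) + 1 := by omega
    have hdvd : d ∣ c * d ^ (n - i) := by
      rw [hni, pow_succ]; exact ⟨c * d ^ (n - (i+1)), by ring⟩
    rw [Function.iterate_succ_apply', Function.iterate_succ_apply', hc]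
    by_cases h : d ∣ (fabd a b d)^[i] q
    · refine ⟨c, ?_⟩
      simp only [fabd, if_pos h, if_pos (Nat.dvd_add hdvd h)]
      obtain ⟨y, hy⟩ := h
      rw [hy, hni, pow_succ]
      rw [show c * (d ^ (n - (i+1)) * d) + d * y = (c * d ^ (n - (i+1)) + y) * d by ring]
      rw [Nat.mul_div_cancel _ (show 0 < d by omega), Nat.mul_div_cancel_left _ (show 0 < d by omega)]
    · refine ⟨a * c * d, ?_⟩
      have h2 : ¬ d ∣ c * d ^ (n - i) + (fabd a b d)^[i] q := fun hh =>
        h ((Nat.dvd_add_right hdvd).mp hh)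
      simp only [fabd, if_neg h, if_neg h2]
      rw [hni, pow_succ]; ring

theorem muabd_add (a b d n p q : ℕ) (hd : 0 < d) :
    muabd a b d n (p * d ^ n + q) = muabd a b d n q := by
  rcases eq_or_lt_of_le (show 1 ≤ d from hd) with h1 | h2
  · unfold muabd
    simp [← h1]
  · unfold muabd
    congr 1
    apply Finset.filter_congr
    intro i hi
    rw [Finset.mem_range] at hi
    obtain ⟨c, hc⟩ := fabd_key a b d n p q h2 i (le_of_lt hi)
    have hdvd : d ∣ c * d ^ (n - i) := by
      have : n - i = (n - (i + 1)) + 1 := by omega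
      rw [this, pow_succ]; exact ⟨c * d ^ (n - (i+1)), by ring⟩
    rw [hc]
    simp [Nat.dvd_add_right hdvd]
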